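/- Let L = {R, G, X, Y} and S_26 = {RRX, RXX, RYY, GYX, GXX, YYX, XXX}, and take L' = {R, G, Y} with the order G > R > Y. Then for all A, B, C ∈ Forb_c(S_26) with B ⊆ A and B ⊆ C, if A ⊗_B C is defined then A ⊗_B C ∈ Forb_c(S_26). -/
import Mathlib


namespace Paper

variable {L M : Type}

/-- The structure with colouring `r` embeds no triangle from `S`
(triangles identified with the multiset of their three edge colours). -/
def Avoids (r : M → M → L) (S : Set (Multiset L)) : Prop :=
  ∀ a b c : M, a ≠ b → a ≠ c → b ≠ c → ({r a b, r a c, r b c} : Multiset L) ∉ S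

/-- The substructure on `T` embeds no triangle from `S`. -/
def AvoidsOn (r : M → M → L) (T : Set M) (S : Set (Multiset L)) : Prop :=
  ∀ a ∈ T, ∀ b ∈ T, ∀ c ∈ T, a ≠ b → a ≠ c → b ≠ c →
    ({r a b, r a c, r b c} : Multiset L) ∉ S

/-- Colouring the pair `(a,c)` by `R` creates no forbidden triangle over a point of `B`. -/
def Compatible (r : M → M → L) (S : Set (Multiset L)) (B : Set M) (a c : M) (R : L) : Prop :=
  ∀ b ∈ B, ({r a b, r b c, R} : Multiset L) ∉ S

/-- `R` is the greatest relation of `L'` (in the priority order `le`) whose use on the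
pair `(a,c)` creates no forbidden triangle over `B`. -/
def PriorityColour (le : L → L → Prop) (r : M → M → L) (S : Set (Multiset L)) (L' : Set L)
    (B : Set M) (a c : M) (R : L) : Prop :=
  (R ∈ L' ∧ Compatible r S B a c R) ∧
    ∀ R' : L, R' ∈ L' → Compatible r S B a c R' → le R' R

/-- `A ⫫_B C`: the substructure on `A ∪ B ∪ C` is the prioritised semi-free amalgam
`(A ∪ B) ⊗_B (B ∪ C)`. -/
def Indep (le : L → L → Prop) (r : M → M → L) (S : Set (Multiset L)) (L' : Set L)
    (A B C : Set M) : Prop :=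
  A ∩ C ⊆ B ∧ ∀ a ∈ A, a ∉ B → ∀ c ∈ C, c ∉ B → PriorityColour le r S L' B a c (r a c)

/-- Whenever the prioritised semi-free amalgam `A ⊗_B C` of members of `Forb_c(S)` is
defined, it lies in `Forb_c(S)`.  (The amalgam is represented by a finite vertex type
`V = A ∪ C` with `B = A ∩ C`, whose cross edges are coloured by the priority rule.) -/
def AmalgamAvoids (le : L → L → Prop) (S : Set (Multiset L)) (L' : Set L) : Prop :=
  ∀ (V : Type) [Fintype V] (rr : V → V → L) (A C : Set V),
    (∀ a b, rr a b = rr b a) → A ∪ C = Set.univ →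
    AvoidsOn rr A S → AvoidsOn rr C S →
    (∀ a ∈ A \ C, ∀ c ∈ C \ A, PriorityColour le rr S L' (A ∩ C) a c (rr a c)) →
    Avoids rr S

/-- The prioritised semi-free amalgam of members of `Forb_c(S)` is always defined. -/
def AmalgamDefined (le : L → L → Prop) (S : Set (Multiset L)) (L' : Set L) : Prop :=
  ∀ (V : Type) [Fintype V] (rr : V → V → L) (A C : Set V),
    (∀ a b, rr a b = rr b a) → A ∪ C = Set.univ →
    AvoidsOn rr A S → AvoidsOn rr C S →
    ∀ a ∈ A \ C, ∀ c ∈ C \ A, ∃ R : L, PriorityColour le rr S L' (A ∩ C) a c R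

/-- `Forb_c(S)` is a prioritised semi-free amalgamation class w.r.t. the order `le` on `L'`. -/
def IsPrioritisedSemiFree (le : L → L → Prop) (S : Set (Multiset L)) (L' : Set L) : Prop :=
  AmalgamDefined le S L' ∧ AmalgamAvoids le S L'

/-- `Forb_c(S)` is a semi-free amalgamation class with set of solutions `L'`. -/
def IsSemiFree (S : Set (Multiset L)) (L' : Set L) : Prop :=
  ∀ (V : Type) [Fintype V] (rr : V → V → L) (A C : Set V),
    (∀ a b, rr a b = rr b a) → A ∪ C = Set.univ →
    AvoidsOn rr A S → AvoidsOn rr C S →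
    ∃ rr' : V → V → L, (∀ a b, rr' a b = rr' b a) ∧ Avoids rr' S ∧
      (∀ a ∈ A, ∀ b ∈ A, rr' a b = rr a b) ∧
      (∀ a ∈ C, ∀ b ∈ C, rr' a b = rr a b) ∧
      (∀ a ∈ A \ C, ∀ c ∈ C \ A, rr' a c ∈ L')

/-- `Forb_c(S)` has the amalgamation property (with joint embedding as the case
of empty intersection); it is then an amalgamation class. -/
def HasAmalgamation (S : Set (Multiset L)) : Prop :=
  ∀ (V : Type) [Fintype V] (rr : V → V → L) (A C : Set V),
    (∀ a b, rr a b = rr b a) → A ∪ C = Set.univ →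
    AvoidsOn rr A S → AvoidsOn rr C S →
    ∃ rr' : V → V → L, (∀ a b, rr' a b = rr' b a) ∧ Avoids rr' S ∧
      (∀ a ∈ A, ∀ b ∈ A, rr' a b = rr a b) ∧
      (∀ a ∈ C, ∀ b ∈ C, rr' a b = rr a b)

/-- `(M, r)` is the Fraïssé limit of `Forb_c(S)`: a countable structure whose complete
edge-colouring avoids `S`, which is homogeneous, and which satisfies the extension
property with respect to members of `Forb_c(S)`. -/
structure IsLimit (S : Set (Multiset L)) (r : M → M → L) : Prop where
  countable : Countable M
  symm : ∀ a b : M, r a b = r b a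
  avoids : Avoids r S
  extension : ∀ (n : ℕ) (c : Fin n → Fin n → L), (∀ i j, c i j = c j i) →
    Avoids c S → ∀ (A : Finset (Fin n)) (f : Fin n → M), Set.InjOn f ↑A →
    (∀ i ∈ A, ∀ j ∈ A, i ≠ j → r (f i) (f j) = c i j) →
    ∃ g : Fin n ↪ M, (∀ i ∈ A, g i = f i) ∧ ∀ i j : Fin n, i ≠ j → r (g i) (g j) = c i j
  homogeneous : ∀ (A : Finset M) (f : M → M), Set.InjOn f ↑A →
    (∀ a ∈ A, ∀ b ∈ A, r (f a) (f b) = r a b) →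
    ∃ g : Equiv.Perm M, (∀ x y, r (g x) (g y) = r x y) ∧ ∀ a ∈ A, g a = f a

/-- The automorphism group of the coloured structure `(M, r)`, as a subgroup of `Perm M`. -/
def aut (r : M → M → L) : Subgroup (Equiv.Perm M) where
  carrier := {g : Equiv.Perm M | ∀ a b, r (g a) (g b) = r a b}
  one_mem' := fun _ _ => rfl
  mul_mem' := by
    intro g h hg hh a b
    have : r (g (h a)) (g (h b)) = r a b := (hg (h a) (h b)).trans (hh a b)
    simpa [Equiv.Perm.mul_apply] using this
  inv_mem' := by
    intro g hg a b
    have := hg (g⁻¹ a) (g⁻¹ b)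
    simpa using this.symm

/-- The pointwise stabiliser `G_(X)` of `X` inside `Aut(M, r)`. -/
def pstab (r : M → M → L) (X : Set M) : Subgroup (aut r) where
  carrier := {g | ∀ x ∈ X, (g : Equiv.Perm M) x = x}
  one_mem' := fun _ _ => rfl
  mul_mem' := by
    intro g h hg hh x hx
    have : (g : Equiv.Perm M) ((h : Equiv.Perm M) x) = x := by rw [hh x hx, hg x hx]
    simpa [Equiv.Perm.mul_apply] using this
  inv_mem' := by
    intro g hg x hx
    have := hg x hx
    simp only [Subgroup.coe_inv]
    conv_lhs => rw [← this]
    simp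

/-- The 1-type of `a` over `X`: its orbit under the pointwise stabiliser of `X`. -/
def typeOf (r : M → M → L) (X : Set M) (a : M) : Set M :=
  {b | ∃ g : Equiv.Perm M, g ∈ aut r ∧ (∀ x ∈ X, g x = x) ∧ g a = b}

/-- Two `n`-tuples have the same type over `X`: they lie in the same orbit under the
pointwise stabiliser of `X`. -/
def SameTypeFn (r : M → M → L) (X : Set M) {n : ℕ} (a b : Fin n → M) : Prop :=
  ∃ g : Equiv.Perm M, g ∈ aut r ∧ (∀ x ∈ X, g x = x) ∧ ∀ i, g (a i) = b i

/-- `f` moves almost maximally: every 1-type over every finite set `X` has a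
realisation `b` with `b ⫫_X f(b)`. -/
def MovesAlmostMaximally (le : L → L → Prop) (r : M → M → L) (S : Set (Multiset L))
    (L' : Set L) (f : Equiv.Perm M) : Prop :=
  ∀ (X : Finset M) (a : M), ∃ b ∈ typeOf r ↑X a, Indep le r S L' {b} ↑X {f b}

/-- The commutator `[x, y] = x⁻¹y⁻¹xy`. -/
def Comm {G : Type*} [Group G] (x y : G) : G := x⁻¹ * y⁻¹ * x * y

/-- `le` is a linear order on the subset `L'`. -/
def IsLinearOn (le : L → L → Prop) (L' : Set L) : Prop :=
  (∀ a ∈ L', le a a) ∧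
  (∀ a ∈ L', ∀ b ∈ L', ∀ c ∈ L', le a b → le b c → le a c) ∧
  (∀ a ∈ L', ∀ b ∈ L', le a b → le b a → a = b) ∧
  (∀ a ∈ L', ∀ b ∈ L', le a b ∨ le b a)

/-- `R1 > R2` are the two greatest relations of `L'` in the order `le`. -/
def TwoGreatest (le : L → L → Prop) (L' : Set L) (R1 R2 : L) : Prop :=
  R1 ∈ L' ∧ R2 ∈ L' ∧ R2 ≠ R1 ∧ le R2 R1 ∧
    (∀ R ∈ L', le R R1) ∧ ∀ R ∈ L', R ≠ R1 → le R R2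

/-- Condition A (i): no triangle of `S` contains two occurrences of `R1`,
or an `R1` together with an `R2`. -/
def CondA1 (S : Set (Multiset L)) (R1 R2 : L) : Prop :=
  ∀ t ∈ S, ¬ (({R1, R1} : Multiset L) ≤ t) ∧ ¬ (({R1, R2} : Multiset L) ≤ t)

/-- Condition A (ii): if `a ⫫_{{b} ∪ B} c` and `r(a,b) ∈ L'` then `a ⫫_B c`. -/
def CondA2 (le : L → L → Prop) (r : M → M → L) (S : Set (Multiset L)) (L' : Set L) : Prop :=
  ∀ (a b c : M) (B : Finset M), r a b ∈ L' →
    Indep le r S L' {a} (insert b ↑B) {c} → Indep le r S L' {a} ↑B {c}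

/-- Condition 1: `S` contains no triangle having two of its three edges in `L'`. -/
def Cond1 (S : Set (Multiset L)) (L' : Set L) : Prop :=
  ∀ t ∈ S, ∀ x ∈ L', ∀ y ∈ L', ¬ (({x, y} : Multiset L) ≤ t)

/-- Condition 2 with respect to `L' = {R1, R2}` (ordered `R1 > R2`) and the subsets
`Lst = L*` and `Lhat = L̂`. -/
def Cond2 (S : Set (Multiset L)) (R1 R2 : L) (Lst Lhat : Set L) : Prop :=
  R1 ≠ R2 ∧ R1 ∉ Lst ∧ R2 ∉ Lst ∧ R1 ∉ Lhat ∧ R2 ∉ Lhat ∧ (∀ x ∈ Lst, x ∉ Lhat) ∧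
  (∀ R' : L, R' ∉ Lhat → R' ≠ R2 → ∀ Ra ∈ Lst, ∀ Rb ∈ Lst,
    ({R', Ra, Rb} : Multiset L) ∈ S) ∧
  (∀ Ra ∈ Lst, ({R2, R2, Ra} : Multiset L) ∈ S) ∧
  (∀ Rh ∈ Lhat, ∀ Ra ∈ Lst, ({R2, Rh, Ra} : Multiset L) ∈ S) ∧
  (∀ t ∈ S, R1 ∈ t → ∃ Ra ∈ Lst, ∃ Rb ∈ Lst, t = ({R1, Ra, Rb} : Multiset L)) ∧
  (∀ t ∈ S, ({R2, R2} : Multiset L) ≤ t → ∃ Ra ∈ Lst, t = ({R2, R2, Ra} : Multiset L))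


/-- The language `L = {R, G, X, Y}` of four binary, symmetric, irreflexive
relation symbols. -/
inductive C4 : Type
  | R | G | X | Y
deriving DecidableEq

/-- The set of forbidden triangles of case #26:
`S_26 = {RRX, RXX, RYY, GYX, GXX, YYX, XXX}`. -/
def S26 : Set (Multiset C4) :=
  {({C4.R, C4.R, C4.X} : Multiset C4), ({C4.R, C4.X, C4.X} : Multiset C4),
   ({C4.R, C4.Y, C4.Y} : Multiset C4), ({C4.G, C4.Y, C4.X} : Multiset C4),
   ({C4.G, C4.X, C4.X} : Multiset C4), ({C4.Y, C4.Y, C4.X} : Multiset C4),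
   ({C4.X, C4.X, C4.X} : Multiset C4)}

/-- The rank realising the priority order `G > R > Y` (with `X` at the bottom). -/
def rank26 : C4 → ℕ
  | C4.G => 3
  | C4.R => 2
  | C4.Y => 1
  | C4.X => 0

/-- The priority order `G > R > Y` on `L' = {R, G, Y}`. -/
def le26 (x y : C4) : Prop := rank26 x ≤ rank26 y


/-- Decidability of membership in `S26`. -/
instance : DecidablePred (· ∈ S26) := fun t =>
  decidable_of_iff (t = {C4.R, C4.R, C4.X} ∨ t = {C4.R, C4.X, C4.X} ∨ t = {C4.R, C4.Y, C4.Y} ∨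
    t = {C4.G, C4.Y, C4.X} ∨ t = {C4.G, C4.X, C4.X} ∨ t = {C4.Y, C4.Y, C4.X} ∨
    t = {C4.X, C4.X, C4.X}) (by simp [S26, Set.mem_insert_iff, Set.mem_singleton_iff])

lemma msA (p q r : C4) : ({p, q, r} : Multiset C4) = {q, p, r} := Multiset.cons_swap p q {r}

lemma msB (p q r : C4) : ({p, q, r} : Multiset C4) = {p, r, q} := by
  show p ::ₘ q ::ₘ r ::ₘ 0 = p ::ₘ r ::ₘ q ::ₘ 0
  rw [Multiset.cons_swap q r]

section Aux

variable {V : Type}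

lemma compat_symm (rr : V → V → C4) (hs : ∀ u v, rr u v = rr v u) (B : Set V) (u v : V)
    (R : C4) (h : Compatible rr S26 B u v R) : Compatible rr S26 B v u R := by
  intro w hw hmem
  exact h w hw (by rwa [hs v w, hs w u, msA] at hmem)

lemma prio_symm (rr : V → V → C4) (hs : ∀ u v, rr u v = rr v u) (B : Set V) (u v : V) (R : C4)
    (h : PriorityColour le26 rr S26 ({C4.R, C4.G, C4.Y} : Set C4) B u v R) :
    PriorityColour le26 rr S26 ({C4.R, C4.G, C4.Y} : Set C4) B v u R :=
  ⟨⟨h.1.1, compat_symm rr hs B u v R h.1.2⟩,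
    fun R' hR' hc => h.2 R' hR' (compat_symm rr hs B v u R' hc)⟩

lemma k12 (rr : V → V → C4) (hs : ∀ u v, rr u v = rr v u) (u v w : V) :
    ({rr u v, rr u w, rr v w} : Multiset C4) = {rr v u, rr v w, rr u w} := by
  rw [hs v u]
  exact msB _ _ _

lemma k23 (rr : V → V → C4) (hs : ∀ u v, rr u v = rr v u) (u v w : V) :
    ({rr u v, rr u w, rr v w} : Multiset C4) = {rr u w, rr u v, rr w v} := by
  rw [hs w v]
  exact msA _ _ _

lemma gwit (rr : V → V → C4) (B : Set V) (a c : V)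
    (P : PriorityColour le26 rr S26 ({C4.R, C4.G, C4.Y} : Set C4) B a c (rr a c))
    (hne : rr a c ≠ C4.G) :
    ∃ w ∈ B, (rr a w = C4.Y ∧ rr w c = C4.X) ∨ (rr a w = C4.X ∧ rr w c = C4.Y) ∨
      (rr a w = C4.X ∧ rr w c = C4.X) := by
  have hng : ¬ Compatible rr S26 B a c C4.G := by
    intro hcg
    have hle := P.2 C4.G (by simp) hcg
    have hm := P.1.1
    simp only [Set.mem_insert_iff, Set.mem_singleton_iff] at hm
    rcases hm with e | e | e <;>
      first
        | exact hne e
        | (rw [e] at hle; simp [le26, rank26] at hle)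
  unfold Compatible at hng
  push_neg at hng
  obtain ⟨w, hwB, hmem⟩ := hng
  refine ⟨w, hwB, ?_⟩
  cases h1 : rr a w <;> cases h2 : rr w c <;> rw [h1, h2] at hmem <;>
    revert hmem <;> decide

lemma crossFalse (rr : V → V → C4) (B : Set V) (a b c : V)
    (hT : ∀ w ∈ B, ({rr a b, rr a w, rr b w} : Multiset C4) ∉ S26)
    (Pac : PriorityColour le26 rr S26 ({C4.R, C4.G, C4.Y} : Set C4) B a c (rr a c))
    (Pbc : PriorityColour le26 rr S26 ({C4.R, C4.G, C4.Y} : Set C4) B b c (rr b c))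
    (h : ({rr a b, rr a c, rr b c} : Multiset C4) ∈ S26) : False := by
  have hac' := Pac.1.1
  have hbc' := Pbc.1.1
  simp only [Set.mem_insert_iff, Set.mem_singleton_iff] at hac' hbc'
  rcases hac' with hac | hac | hac <;> rcases hbc' with hbc | hbc | hbc <;>
    cases hab : rr a b <;> rw [hab, hac, hbc] at h <;>
    try exact absurd h (by decide)
  -- s1 : R R X
  · obtain ⟨w, hwB, hw⟩ := gwit rr B a c Pac (by rw [hac]; decide)
    have t := hT w hwB
    have c1 := Pac.1.2 w hwB
    have c2 := Pbc.1.2 w hwB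
    rw [hab] at t; rw [hac] at c1; rw [hbc] at c2
    rcases hw with ⟨h1, h2⟩ | ⟨h1, h2⟩ | ⟨h1, h2⟩ <;>
      rw [h1] at t c1 <;> rw [h2] at c1 c2 <;>
      cases hbw : rr b w <;> rw [hbw] at t c2 <;> revert t c1 c2 <;> decide
  -- s2 : R Y Y
  · obtain ⟨w, hwB, hw⟩ := gwit rr B a c Pac (by rw [hac]; decide)
    have t := hT w hwB
    have c1 := Pac.1.2 w hwB
    have c2 := Pbc.1.2 w hwB
    rw [hab] at t; rw [hac] at c1; rw [hbc] at c2
    rcases hw with ⟨h1, h2⟩ | ⟨h1, h2⟩ | ⟨h1, h2⟩ <;>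
      rw [h1] at t c1 <;> rw [h2] at c1 c2 <;>
      cases hbw : rr b w <;> rw [hbw] at t c2 <;> revert t c1 c2 <;> decide
  -- s3 : G Y X  (witness from (b,c))
  · obtain ⟨w, hwB, hw⟩ := gwit rr B b c Pbc (by rw [hbc]; decide)
    have t := hT w hwB
    have c1 := Pac.1.2 w hwB
    have c2 := Pbc.1.2 w hwB
    rw [hab] at t; rw [hac] at c1; rw [hbc] at c2
    rcases hw with ⟨h1, h2⟩ | ⟨h1, h2⟩ | ⟨h1, h2⟩ <;>
      rw [h1] at t c2 <;> rw [h2] at c1 c2 <;>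
      cases haw : rr a w <;> rw [haw] at t c1 <;> revert t c1 c2 <;> decide
  -- s4 : Y R Y  (witness from (b,c))
  · obtain ⟨w, hwB, hw⟩ := gwit rr B b c Pbc (by rw [hbc]; decide)
    have t := hT w hwB
    have c1 := Pac.1.2 w hwB
    have c2 := Pbc.1.2 w hwB
    rw [hab] at t; rw [hac] at c1; rw [hbc] at c2
    rcases hw with ⟨h1, h2⟩ | ⟨h1, h2⟩ | ⟨h1, h2⟩ <;>
      rw [h1] at t c2 <;> rw [h2] at c1 c2 <;>
      cases haw : rr a w <;> rw [haw] at t c1 <;> revert t c1 c2 <;> decide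
  -- s5 : Y G X
  · obtain ⟨w, hwB, hw⟩ := gwit rr B a c Pac (by rw [hac]; decide)
    have t := hT w hwB
    have c1 := Pac.1.2 w hwB
    have c2 := Pbc.1.2 w hwB
    rw [hab] at t; rw [hac] at c1; rw [hbc] at c2
    rcases hw with ⟨h1, h2⟩ | ⟨h1, h2⟩ | ⟨h1, h2⟩ <;>
      rw [h1] at t c1 <;> rw [h2] at c1 c2 <;>
      cases hbw : rr b w <;> rw [hbw] at t c2 <;> revert t c1 c2 <;> decide
  -- s6 : Y Y R
  · obtain ⟨w, hwB, hw⟩ := gwit rr B a c Pac (by rw [hac]; decide)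
    have t := hT w hwB
    have c1 := Pac.1.2 w hwB
    have c2 := Pbc.1.2 w hwB
    rw [hab] at t; rw [hac] at c1; rw [hbc] at c2
    rcases hw with ⟨h1, h2⟩ | ⟨h1, h2⟩ | ⟨h1, h2⟩ <;>
      rw [h1] at t c1 <;> rw [h2] at c1 c2 <;>
      cases hbw : rr b w <;> rw [hbw] at t c2 <;> revert t c1 c2 <;> decide
  -- s7 : Y Y X
  · obtain ⟨w, hwB, hw⟩ := gwit rr B a c Pac (by rw [hac]; decide)
    have t := hT w hwB
    have c1 := Pac.1.2 w hwB
    have c2 := Pbc.1.2 w hwB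
    rw [hab] at t; rw [hac] at c1; rw [hbc] at c2
    rcases hw with ⟨h1, h2⟩ | ⟨h1, h2⟩ | ⟨h1, h2⟩ <;>
      rw [h1] at t c1 <;> rw [h2] at c1 c2 <;>
      cases hbw : rr b w <;> rw [hbw] at t c2 <;> revert t c1 c2 <;> decide

lemma key (rr : V → V → C4) (A C : Set V) (hs : ∀ u v, rr u v = rr v u)
    (hA : AvoidsOn rr A S26) (a b c : V)
    (haA : a ∈ A) (haC : a ∉ C) (hbA : b ∈ A) (hbC : b ∉ C) (hcC : c ∈ C) (hcA : c ∉ A)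
    (hab : a ≠ b)
    (Pac : PriorityColour le26 rr S26 ({C4.R, C4.G, C4.Y} : Set C4) (A ∩ C) a c (rr a c))
    (Pbc : PriorityColour le26 rr S26 ({C4.R, C4.G, C4.Y} : Set C4) (A ∩ C) b c (rr b c))
    (h : ({rr a b, rr a c, rr b c} : Multiset C4) ∈ S26) : False := by
  refine crossFalse rr (A ∩ C) a b c ?_ Pac Pbc h
  intro w hw
  exact hA a haA b hbA w hw.1 hab (fun e => haC (e ▸ hw.2)) (fun e => hbC (e ▸ hw.2))

lemma keyC (rr : V → V → C4) (A C : Set V) (hs : ∀ u v, rr u v = rr v u)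
    (hC : AvoidsOn rr C S26) (a b c : V)
    (haC : a ∈ C) (haA : a ∉ A) (hbC : b ∈ C) (hbA : b ∉ A) (hcA : c ∈ A) (hcC : c ∉ C)
    (hab : a ≠ b)
    (Pca : PriorityColour le26 rr S26 ({C4.R, C4.G, C4.Y} : Set C4) (A ∩ C) c a (rr c a))
    (Pcb : PriorityColour le26 rr S26 ({C4.R, C4.G, C4.Y} : Set C4) (A ∩ C) c b (rr c b))
    (h : ({rr a b, rr a c, rr b c} : Multiset C4) ∈ S26) : False := by
  have Pac : PriorityColour le26 rr S26 ({C4.R, C4.G, C4.Y} : Set C4) (A ∩ C) a c (rr a c) := by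
    rw [hs a c]; exact prio_symm rr hs (A ∩ C) c a (rr c a) Pca
  have Pbc : PriorityColour le26 rr S26 ({C4.R, C4.G, C4.Y} : Set C4) (A ∩ C) b c (rr b c) := by
    rw [hs b c]; exact prio_symm rr hs (A ∩ C) c b (rr c b) Pcb
  refine crossFalse rr (A ∩ C) a b c ?_ Pac Pbc h
  intro w hw
  exact hC a haC b hbC w hw.2 hab (fun e => haA (e ▸ hw.1)) (fun e => hbA (e ▸ hw.1))

lemma keyM (rr : V → V → C4) (B : Set V) (a w c : V) (hw : w ∈ B)
    (P : PriorityColour le26 rr S26 ({C4.R, C4.G, C4.Y} : Set C4) B a c (rr a c))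
    (h : ({rr a w, rr a c, rr w c} : Multiset C4) ∈ S26) : False :=
  P.1.2 w hw (by rwa [msB] at h)

end Aux

/-- **Lemma.** For case #26, with `L' = {R, G, Y}` ordered `G > R > Y`: for all
`A, B, C ∈ Forb_c(S_26)` with `B ⊆ A` and `B ⊆ C`, if the prioritised semi-free
amalgam `A ⊗_B C` is defined then it lies in `Forb_c(S_26)`. -/
theorem case26_amalgam_avoids :
    AmalgamAvoids le26 S26 ({C4.R, C4.G, C4.Y} : Set C4) := by
  intro V _ rr A C hsymm huniv hA hC hP
  intro x y z hxy hxz hyz h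
  have mem : ∀ v : V, v ∈ A ∨ v ∈ C := fun v => by
    have hv : v ∈ A ∪ C := by rw [huniv]; exact Set.mem_univ v
    exact hv
  have tri : ∀ v : V, (v ∈ A ∧ v ∉ C) ∨ (v ∈ A ∧ v ∈ C) ∨ (v ∈ C ∧ v ∉ A) := fun v => by
    by_cases h1 : v ∈ A <;> by_cases h2 : v ∈ C
    · exact Or.inr (Or.inl ⟨h1, h2⟩)
    · exact Or.inl ⟨h1, h2⟩
    · exact Or.inr (Or.inr ⟨h2, h1⟩)
    · rcases mem v with hv | hv
      exacts [absurd hv h1, absurd hv h2]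
  rcases tri x with ⟨hx1, hx2⟩ | ⟨hx1, hx2⟩ | ⟨hx1, hx2⟩ <;>
    rcases tri y with ⟨hy1, hy2⟩ | ⟨hy1, hy2⟩ | ⟨hy1, hy2⟩ <;>
    rcases tri z with ⟨hz1, hz2⟩ | ⟨hz1, hz2⟩ | ⟨hz1, hz2⟩ <;>
    first
      | exact hA x ‹x ∈ A› y ‹y ∈ A› z ‹z ∈ A› hxy hxz hyz h
      | exact hC x ‹x ∈ C› y ‹y ∈ C› z ‹z ∈ C› hxy hxz hyz h
      | skip
  -- aac
  · exact key rr A C hsymm hA x y z hx1 hx2 hy1 hy2 hz1 hz2 hxy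
      (hP x ⟨hx1, hx2⟩ z ⟨hz1, hz2⟩) (hP y ⟨hy1, hy2⟩ z ⟨hz1, hz2⟩) h
  -- amc
  · exact keyM rr (A ∩ C) x y z ⟨hy1, hy2⟩ (hP x ⟨hx1, hx2⟩ z ⟨hz1, hz2⟩) h
  -- aca
  · rw [k23 rr hsymm x y z] at h
    exact key rr A C hsymm hA x z y hx1 hx2 hz1 hz2 hy1 hy2 hxz
      (hP x ⟨hx1, hx2⟩ y ⟨hy1, hy2⟩) (hP z ⟨hz1, hz2⟩ y ⟨hy1, hy2⟩) h
  -- acm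
  · rw [k23 rr hsymm x y z] at h
    exact keyM rr (A ∩ C) x z y ⟨hz1, hz2⟩ (hP x ⟨hx1, hx2⟩ y ⟨hy1, hy2⟩) h
  -- acc
  · rw [k12 rr hsymm x y z, k23 rr hsymm y x z] at h
    exact keyC rr A C hsymm hC y z x hy1 hy2 hz1 hz2 hx1 hx2 hyz
      (hP x ⟨hx1, hx2⟩ y ⟨hy1, hy2⟩) (hP x ⟨hx1, hx2⟩ z ⟨hz1, hz2⟩) h
  -- mac
  · rw [k12 rr hsymm x y z] at h
    exact keyM rr (A ∩ C) y x z ⟨hx1, hx2⟩ (hP y ⟨hy1, hy2⟩ z ⟨hz1, hz2⟩) h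
  -- mca
  · rw [k23 rr hsymm x y z, k12 rr hsymm x z y] at h
    exact keyM rr (A ∩ C) z x y ⟨hx1, hx2⟩ (hP z ⟨hz1, hz2⟩ y ⟨hy1, hy2⟩) h
  -- caa
  · rw [k12 rr hsymm x y z, k23 rr hsymm y x z] at h
    exact key rr A C hsymm hA y z x hy1 hy2 hz1 hz2 hx1 hx2 hyz
      (hP y ⟨hy1, hy2⟩ x ⟨hx1, hx2⟩) (hP z ⟨hz1, hz2⟩ x ⟨hx1, hx2⟩) h
  -- cam
  · rw [k12 rr hsymm x y z, k23 rr hsymm y x z] at h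
    exact keyM rr (A ∩ C) y z x ⟨hz1, hz2⟩ (hP y ⟨hy1, hy2⟩ x ⟨hx1, hx2⟩) h
  -- cac
  · rw [k23 rr hsymm x y z] at h
    exact keyC rr A C hsymm hC x z y hx1 hx2 hz1 hz2 hy1 hy2 hxz
      (hP y ⟨hy1, hy2⟩ x ⟨hx1, hx2⟩) (hP y ⟨hy1, hy2⟩ z ⟨hz1, hz2⟩) h
  -- cma
  · rw [k12 rr hsymm x y z, k23 rr hsymm y x z, k12 rr hsymm y z x] at h
    exact keyM rr (A ∩ C) z y x ⟨hy1, hy2⟩ (hP z ⟨hz1, hz2⟩ x ⟨hx1, hx2⟩) h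
  -- cca
  · exact keyC rr A C hsymm hC x y z hx1 hx2 hy1 hy2 hz1 hz2 hxy
      (hP z ⟨hz1, hz2⟩ x ⟨hx1, hx2⟩) (hP z ⟨hz1, hz2⟩ y ⟨hy1, hy2⟩) h


end Paper
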